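/- If f : (0,∞) → ℝ is completely monotone and h : (0,∞) → (0,∞) is differentiable with h' completely monotone, then f ∘ h is completely monotone. -/

import Mathlib

open Real Set

/-- A function is completely monotone on `(0, ∞)` if it is infinitely differentiable there
and `(-1)^n f^(n)(x) ≥ 0` for all `n ≥ 0` and `x > 0`. -/
def CompletelyMonotoneOn (f : ℝ → ℝ) : Prop :=
  (∀ x : ℝ, 0 < x → ContDiffAt ℝ ((⊤ : ℕ∞) : WithTop ℕ∞) f x) ∧
    ∀ (n : ℕ) (x : ℝ), 0 < x → 0 ≤ (-1 : ℝ) ^ n * iteratedDeriv n f x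

lemma my_one_le_inf : (1 : WithTop ℕ∞) ≤ ((⊤ : ℕ∞) : WithTop ℕ∞) := by
  exact_mod_cast (le_top : (1:ℕ∞) ≤ ⊤)

lemma my_inf_add_one : ((⊤ : ℕ∞) : WithTop ℕ∞) + 1 = ((⊤ : ℕ∞) : WithTop ℕ∞) := rfl

lemma my_natle (n : ℕ) : (n : WithTop ℕ∞) ≤ ((⊤ : ℕ∞) : WithTop ℕ∞) := by
  exact_mod_cast (le_top : (n : ℕ∞) ≤ ⊤)

lemma idw_isOpen {n : ℕ} {f : ℝ → ℝ} {s : Set ℝ} {x : ℝ} (hs : IsOpen s) (hx : x ∈ s) :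
    iteratedDerivWithin n f s x = iteratedDeriv n f x := by
  rw [iteratedDerivWithin_eq_iteratedFDerivWithin, iteratedDeriv_eq_iteratedFDeriv,
    iteratedFDerivWithin_of_isOpen n hs hx]

/-- Leibniz rule for iterated derivatives within an open set. -/
lemma my_leibniz {s : Set ℝ} (hs : IsOpen s) (n : ℕ) :
    ∀ (F G : ℝ → ℝ), ContDiffOn ℝ ((⊤ : ℕ∞) : WithTop ℕ∞) F s →
      ContDiffOn ℝ ((⊤ : ℕ∞) : WithTop ℕ∞) G s → ∀ x ∈ s,
      iteratedDerivWithin n (fun y => F y * G y) s x =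
        ∑ k ∈ Finset.range (n+1), (n.choose k : ℝ) * iteratedDerivWithin k F s x *
          iteratedDerivWithin (n-k) G s x := by
  have hu : UniqueDiffOn ℝ s := hs.uniqueDiffOn
  induction n with
  | zero =>
    intro F G _ _ x hx
    simp
  | succ n IH =>
    intro F G hF hG x hx
    have hF' : ContDiffOn ℝ ((⊤ : ℕ∞) : WithTop ℕ∞) (deriv F) s :=
      hF.deriv_of_isOpen hs (le_of_eq my_inf_add_one)
    have hG' : ContDiffOn ℝ ((⊤ : ℕ∞) : WithTop ℕ∞) (deriv G) s :=
      hG.deriv_of_isOpen hs (le_of_eq my_inf_add_one)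
    have hdF : ∀ y ∈ s, DifferentiableAt ℝ F y := fun y hy =>
      ((hF.differentiableOn (by simp)) y hy).differentiableAt (hs.mem_nhds hy)
    have hdG : ∀ y ∈ s, DifferentiableAt ℝ G y := fun y hy =>
      ((hG.differentiableOn (by simp)) y hy).differentiableAt (hs.mem_nhds hy)
    have key : Set.EqOn (derivWithin (fun y => F y * G y) s)
        ((fun y => deriv F y * G y) + fun y => F y * deriv G y) s := by
      intro y hy
      rw [derivWithin_of_isOpen hs hy]
      exact deriv_fun_mul (hdF y hy) (hdG y hy)
    rw [iteratedDerivWithin_succ', iteratedDerivWithin_congr key hx,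
      iteratedDerivWithin_add hx hu (((hF'.mul hG).of_le (my_natle n)) x hx) (((hF.mul hG').of_le (my_natle n)) x hx),
      IH _ _ hF' hG x hx, IH _ _ hF hG' x hx]
    have hshift : ∀ (k : ℕ) (F : ℝ → ℝ),
        iteratedDerivWithin k (deriv F) s x = iteratedDerivWithin (k+1) F s x := by
      intro k F
      rw [iteratedDerivWithin_succ']
      exact iteratedDerivWithin_congr (f := deriv F) (g := derivWithin F s)
        (fun y hy => (derivWithin_of_isOpen hs hy).symm) hx
    simp only [hshift]
    have h2 : ∑ k ∈ Finset.range (n+1), (n.choose k : ℝ) * iteratedDerivWithin k F s x *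
          iteratedDerivWithin (n-k+1) G s x
        = ∑ k ∈ Finset.range (n+1), (n.choose k : ℝ) * iteratedDerivWithin k F s x *
          iteratedDerivWithin (n+1-k) G s x := by
      refine Finset.sum_congr rfl fun k hk => ?_
      have hk' := Finset.mem_range.1 hk
      have : n - k + 1 = n + 1 - k := by omega
      rw [this]
    rw [h2,
      Finset.sum_range_succ' (fun k => ((n+1).choose k : ℝ) * iteratedDerivWithin k F s x *
        iteratedDerivWithin (n+1-k) G s x) (n+1),
      Finset.sum_range_succ' (fun k => ((n).choose k : ℝ) * iteratedDerivWithin k F s x *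
        iteratedDerivWithin (n+1-k) G s x) n]
    simp only [Nat.succ_sub_succ_eq_sub, Nat.add_sub_add_right]
    have hext : ∑ k ∈ Finset.range n, (n.choose (k+1) : ℝ) * iteratedDerivWithin (k+1) F s x *
          iteratedDerivWithin (n-k) G s x
        = ∑ k ∈ Finset.range (n+1), (n.choose (k+1) : ℝ) * iteratedDerivWithin (k+1) F s x *
          iteratedDerivWithin (n-k) G s x := by
      rw [Finset.sum_range_succ, Nat.choose_succ_self]
      simp
    rw [hext]
    have hcomb : ∑ k ∈ Finset.range (n+1), ((n.choose k : ℝ) * iteratedDerivWithin (k+1) F s x *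
          iteratedDerivWithin (n-k) G s x + (n.choose (k+1) : ℝ) *
          iteratedDerivWithin (k+1) F s x * iteratedDerivWithin (n-k) G s x)
        = ∑ k ∈ Finset.range (n+1), ((n+1).choose (k+1) : ℝ) *
          iteratedDerivWithin (k+1) F s x * iteratedDerivWithin (n-k) G s x := by
      refine Finset.sum_congr rfl fun k hk => ?_
      rw [Nat.choose_succ_succ]
      push_cast
      ring
    rw [← hcomb, Finset.sum_add_distrib]
    norm_num
    ring

lemma cm_contDiffOn {f : ℝ → ℝ} (hf : CompletelyMonotoneOn f) :
    ContDiffOn ℝ ((⊤ : ℕ∞) : WithTop ℕ∞) f (Ioi (0:ℝ)) :=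
  contDiffOn_infty.2 fun m y hy => ((hf.1 y hy).of_le (my_natle m)).contDiffWithinAt

lemma cm_neg_deriv {f : ℝ → ℝ} (hf : CompletelyMonotoneOn f) :
    CompletelyMonotoneOn (fun y => -deriv f y) := by
  have hs : IsOpen (Ioi (0:ℝ)) := isOpen_Ioi
  have hd : ContDiffOn ℝ ((⊤ : ℕ∞) : WithTop ℕ∞) (deriv f) (Ioi (0:ℝ)) :=
    (cm_contDiffOn hf).deriv_of_isOpen hs (le_of_eq my_inf_add_one)
  constructor
  · intro x hx
    exact ((hd.contDiffAt (hs.mem_nhds hx)).neg : ContDiffAt ℝ _ (fun y => -deriv f y) x)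
  · intro n x hx
    have : iteratedDeriv n (fun y => -deriv f y) x = -iteratedDeriv n (deriv f) x := by
      simpa using iteratedDeriv_neg n (deriv f) x
    rw [this, ← iteratedDeriv_succ']
    have := hf.2 (n+1) x hx
    calc (0:ℝ) ≤ (-1)^(n+1) * iteratedDeriv (n+1) f x := this
      _ = (-1)^n * -iteratedDeriv (n+1) f x := by ring

theorem completelyMonotone_comp
    (f h : ℝ → ℝ) (hf : CompletelyMonotoneOn f)
    (hpos : ∀ x : ℝ, 0 < x → 0 < h x)
    (hdiff : ∀ x : ℝ, 0 < x → DifferentiableAt ℝ h x)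
    (hder : CompletelyMonotoneOn (deriv h)) :
    CompletelyMonotoneOn (f ∘ h) := by
  set s : Set ℝ := Ioi (0:ℝ) with hs_def
  have hs : IsOpen s := isOpen_Ioi
  have hu : UniqueDiffOn ℝ s := hs.uniqueDiffOn
  have hB : ContDiffOn ℝ ((⊤ : ℕ∞) : WithTop ℕ∞) (deriv h) s := cm_contDiffOn hder
  have hsm : ContDiffOn ℝ ((⊤ : ℕ∞) : WithTop ℕ∞) h s :=
    (contDiffOn_infty_iff_deriv_of_isOpen hs).2
      ⟨fun y hy => (hdiff y hy).differentiableWithinAt, hB⟩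
  have key : ∀ n : ℕ, ∀ f : ℝ → ℝ, CompletelyMonotoneOn f → ∀ x ∈ s,
      0 ≤ (-1:ℝ)^n * iteratedDerivWithin n (f ∘ h) s x := by
    intro n
    induction n using Nat.strong_induction_on with
    | _ n IH =>
      match n with
      | 0 =>
        intro f hf x hx
        simpa using hf.2 0 (h x) (hpos x hx)
      | (m+1) =>
        intro f hf x hx
        set g : ℝ → ℝ := fun y => -deriv f y with hg_def
        have hg : CompletelyMonotoneOn g := cm_neg_deriv hf
        have e1 : iteratedDerivWithin (m+1) (f ∘ h) s x
            = iteratedDerivWithin m (fun y => deriv f (h y) * deriv h y) s x := by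
          rw [iteratedDerivWithin_succ']
          refine iteratedDerivWithin_congr (fun y hy => ?_) hx
          rw [derivWithin_of_isOpen hs hy]
          exact deriv_comp y ((hf.1 (h y) (hpos y hy)).differentiableAt (by simp))
            (hdiff y hy)
        have e2 : iteratedDerivWithin m (fun y => deriv f (h y) * deriv h y) s x
            = - iteratedDerivWithin m (fun y => g (h y) * deriv h y) s x := by
          rw [← iteratedDerivWithin_fun_neg]
          refine iteratedDerivWithin_congr (fun y hy => ?_) hx
          simp [hg_def]
        have hgh : ContDiffOn ℝ ((⊤ : ℕ∞) : WithTop ℕ∞) (g ∘ h) s :=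
          (cm_contDiffOn hg).comp hsm (fun y hy => hpos y hy)
        have e3 := my_leibniz hs m (g ∘ h) (deriv h) hgh hB x hx
        rw [e1, e2]
        have e4 : (fun y => g (h y) * deriv h y) = fun y => (g ∘ h) y * deriv h y := rfl
        rw [e4, e3]
        have : (-1:ℝ)^(m+1) * -(∑ k ∈ Finset.range (m+1), (m.choose k : ℝ) *
            iteratedDerivWithin k (g ∘ h) s x * iteratedDerivWithin (m-k) (deriv h) s x)
            = ∑ k ∈ Finset.range (m+1), (-1:ℝ)^m * ((m.choose k : ℝ) *
            iteratedDerivWithin k (g ∘ h) s x * iteratedDerivWithin (m-k) (deriv h) s x) := by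
          rw [← Finset.mul_sum]
          ring
        rw [this]
        refine Finset.sum_nonneg fun k hk => ?_
        have hk' : k ≤ m := Nat.lt_succ_iff.1 (Finset.mem_range.1 hk)
        have hA : 0 ≤ (-1:ℝ)^k * iteratedDerivWithin k (g ∘ h) s x :=
          IH k (Nat.lt_succ_of_le hk') g hg x hx
        have hBk : 0 ≤ (-1:ℝ)^(m-k) * iteratedDerivWithin (m-k) (deriv h) s x := by
          rw [idw_isOpen hs hx]
          exact hder.2 (m-k) x hx
        have hsign : (-1:ℝ)^m = (-1:ℝ)^k * (-1:ℝ)^(m-k) := by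
          rw [← pow_add]
          congr 1
          omega
        calc (0:ℝ) ≤ (m.choose k : ℝ) * ((-1:ℝ)^k * iteratedDerivWithin k (g ∘ h) s x)
              * ((-1:ℝ)^(m-k) * iteratedDerivWithin (m-k) (deriv h) s x) :=
            mul_nonneg (mul_nonneg (Nat.cast_nonneg _) hA) hBk
          _ = (-1:ℝ)^m * ((m.choose k : ℝ) * iteratedDerivWithin k (g ∘ h) s x *
              iteratedDerivWithin (m-k) (deriv h) s x) := by rw [hsign]; ring
  constructor
  · intro x hx
    exact (hf.1 (h x) (hpos x hx)).comp x ((hsm.contDiffAt (hs.mem_nhds hx)))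
  · intro n x hx
    rw [← idw_isOpen hs (by exact hx : x ∈ s)]
    exact key n f hf x hx
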